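/- For d ≥ 3, the operator S_d maps H¹([0,1]) boundedly into H¹([0,1]) with operator norm at most (2 + c_d/2)^{1/2}. -/

import Mathlib

open MeasureTheory Real Set

noncomputable def c (d : ℕ) : ℝ :=
  2 * Real.Gamma ((d : ℝ) / 2) / (Real.sqrt π * Real.Gamma (((d : ℝ) - 1) / 2))

noncomputable def rho (d : ℕ) (t : ℝ) : ℝ :=
  c d * (1 - t ^ 2) ^ (((d : ℝ) - 3) / 2)

noncomputable def S (d : ℕ) (f : ℝ → ℝ) (s : ℝ) : ℝ :=
  ∫ t in (0:ℝ)..1, f (t * s) * rho d t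

/-- Cauchy-Schwarz for integrals. -/
lemma my_cs {α : Type*} {m : MeasurableSpace α} {μ : Measure α} {φ ψ : α → ℝ}
    (hφ : MemLp φ 2 μ) (hψ : MemLp ψ 2 μ) :
    (∫ x, φ x * ψ x ∂μ)^2 ≤ (∫ x, φ x ^2 ∂μ) * (∫ x, ψ x ^2 ∂μ) := by
  have hconj : Real.HolderConjugate 2 2 := Real.HolderConjugate.two_two
  have h2 : (ENNReal.ofReal (2:ℝ)) = 2 := by
    rw [show (2:ℝ) = ((2:ℕ):ℝ) by norm_num, ENNReal.ofReal_natCast]; norm_num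
  have habs : ∀ z : ℝ, |z| ^ (2:ℝ) = z^2 := fun z => by
    rw [show (2:ℝ) = ((2:ℕ):ℝ) by norm_num, Real.rpow_natCast, sq_abs]
  have key := integral_mul_le_Lp_mul_Lq_of_nonneg hconj
      (f := fun x => |φ x|) (g := fun x => |ψ x|)
      (ae_of_all _ fun x => abs_nonneg (φ x)) (ae_of_all _ fun x => abs_nonneg (ψ x))
      (h2 ▸ hφ.abs) (h2 ▸ hψ.abs)
  simp only [habs] at key
  have h1 : |∫ x, φ x * ψ x ∂μ| ≤ ∫ x, |φ x| * |ψ x| ∂μ := by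
    simpa [abs_mul] using norm_integral_le_integral_norm (fun x => φ x * ψ x) (μ := μ)
  have hnn : 0 ≤ ∫ x, |φ x| * |ψ x| ∂μ :=
    integral_nonneg fun x => mul_nonneg (abs_nonneg _) (abs_nonneg _)
  have hφ2 : 0 ≤ ∫ x, φ x ^2 ∂μ := integral_nonneg fun x => sq_nonneg _
  have hψ2 : 0 ≤ ∫ x, ψ x ^2 ∂μ := integral_nonneg fun x => sq_nonneg _
  have hsq : ∀ X : ℝ, 0 ≤ X → (X^((1:ℝ)/2))^2 = X := fun X hX => by
    rw [← Real.rpow_natCast (X^((1:ℝ)/2)) 2, ← Real.rpow_mul hX]; norm_num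
  calc (∫ x, φ x * ψ x ∂μ)^2 = |∫ x, φ x * ψ x ∂μ|^2 := (sq_abs _).symm
    _ ≤ (∫ x, |φ x| * |ψ x| ∂μ)^2 := by
        apply pow_le_pow_left₀ (abs_nonneg _) h1
    _ ≤ ((∫ x, φ x ^2 ∂μ) ^ ((1:ℝ)/2) * (∫ x, ψ x ^2 ∂μ) ^ ((1:ℝ)/2))^2 := by
        apply pow_le_pow_left₀ hnn key
    _ = (∫ x, φ x ^2 ∂μ) * (∫ x, ψ x ^2 ∂μ) := by
        rw [mul_pow, hsq _ hφ2, hsq _ hψ2]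

lemma real_beta {p q : ℝ} (hp : 0 < p) (hq : 0 < q) :
    ∫ x in (0:ℝ)..1, x^(p-1) * (1-x)^(q-1) = Real.Gamma p * Real.Gamma q / Real.Gamma (p+q) := by
  have key := Complex.Gamma_mul_Gamma_eq_betaIntegral (s := (p:ℂ)) (t := (q:ℂ))
      (by simpa using hp) (by simpa using hq)
  have hbeta : Complex.betaIntegral p q = ((∫ x in (0:ℝ)..1, x^(p-1) * (1-x)^(q-1) : ℝ) : ℂ) := by
    rw [Complex.betaIntegral, ← intervalIntegral.integral_ofReal]
    apply intervalIntegral.integral_congr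
    intro x hx
    rw [uIcc_of_le zero_le_one] at hx
    push_cast
    rw [Complex.ofReal_cpow hx.1 (p-1),
        Complex.ofReal_cpow (by linarith [hx.2] : (0:ℝ) ≤ 1 - x) (q-1)]
    push_cast; ring
  rw [hbeta, ← Complex.ofReal_add, Complex.Gamma_ofReal, Complex.Gamma_ofReal,
      Complex.Gamma_ofReal] at key
  have hre : Real.Gamma p * Real.Gamma q
      = Real.Gamma (p+q) * ∫ x in (0:ℝ)..1, x^(p-1) * (1-x)^(q-1) := by exact_mod_cast key
  have hne : Real.Gamma (p+q) ≠ 0 := (Real.Gamma_pos_of_pos (by linarith)).ne'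
  rw [hre, mul_comm, mul_div_assoc, div_self hne, mul_one]
section RhoFacts

open intervalIntegral

variable {d : ℕ}

lemma c_pos (hd : 3 ≤ d) : 0 < c d := by
  have hd3 : (3:ℝ) ≤ (d:ℝ) := by exact_mod_cast hd
  apply div_pos
  · exact mul_pos two_pos (Real.Gamma_pos_of_pos (by linarith))
  · exact mul_pos (Real.sqrt_pos.mpr Real.pi_pos) (Real.Gamma_pos_of_pos (by linarith))

lemma rho_eq_sqrt (hd : 3 ≤ d) {t : ℝ} (ht : t ∈ Icc (-1:ℝ) 1) :
    rho d t = c d * Real.sqrt ((1 - t^2)^(d-3)) := by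
  have h1 : (0:ℝ) ≤ 1 - t^2 := by nlinarith [ht.1, ht.2]
  unfold rho
  congr 1
  rw [Real.sqrt_eq_rpow, ← Real.rpow_natCast (1 - t^2) (d-3), ← Real.rpow_mul h1]
  congr 1
  have : ((d - 3 : ℕ) : ℝ) = (d : ℝ) - 3 := by
    push_cast [Nat.cast_sub hd]; ring
  rw [this]; ring

lemma rho_contOn (hd : 3 ≤ d) : ContinuousOn (rho d) (Icc (0:ℝ) 1) := by
  have : Continuous fun t : ℝ => c d * Real.sqrt ((1 - t^2)^(d-3)) := by
    apply continuous_const.mul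
    exact (continuous_const.sub (continuous_pow 2)).pow (d-3) |>.sqrt
  exact this.continuousOn.congr fun t ht =>
    rho_eq_sqrt hd ⟨by linarith [ht.1], ht.2⟩

lemma rho_nonneg (hd : 3 ≤ d) {t : ℝ} (ht : t ∈ Icc (0:ℝ) 1) : 0 ≤ rho d t := by
  rw [rho_eq_sqrt hd ⟨by linarith [ht.1], ht.2⟩]
  exact mul_nonneg (c_pos hd).le (Real.sqrt_nonneg _)

lemma rho_le (hd : 3 ≤ d) {t : ℝ} (ht : t ∈ Icc (0:ℝ) 1) : rho d t ≤ c d := by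
  rw [rho_eq_sqrt hd ⟨by linarith [ht.1], ht.2⟩]
  have h1 : (0:ℝ) ≤ 1 - t^2 := by nlinarith [ht.1, ht.2]
  have h2 : (1 - t^2)^(d-3) ≤ 1 := by
    apply pow_le_one₀ h1; nlinarith [ht.1]
  calc c d * Real.sqrt ((1 - t^2)^(d-3)) ≤ c d * 1 := by
        apply mul_le_mul_of_nonneg_left _ (c_pos hd).le
        exact Real.sqrt_le_one.mpr h2
    _ = c d := mul_one _

lemma rho_measurable : Measurable (rho d) := by unfold rho; measurability

lemma rho_intervalIntegrable (hd : 3 ≤ d) : IntervalIntegrable (rho d) volume 0 1 := by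
  apply ContinuousOn.intervalIntegrable
  rw [uIcc_of_le zero_le_one]
  exact rho_contOn hd

lemma integral_rho (hd : 3 ≤ d) : ∫ t in (0:ℝ)..1, rho d t = 1 := by
  have hd3 : (3:ℝ) ≤ (d:ℝ) := by exact_mod_cast hd
  set a : ℝ := ((d:ℝ)-3)/2 with ha
  have ha0 : 0 ≤ a := by unfold a; linarith
  set g : ℝ → ℝ := fun x => x ^ (-(1/2) : ℝ) * (1-x)^a with hg
  -- continuity of x ↦ (1-x²)^a on [0,1]
  have hbase : ContinuousOn (fun x : ℝ => (1 - x^2)^a) (Icc (0:ℝ) 1) := by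
    have := rho_contOn (d := d) hd
    have hc := (c_pos (d := d) hd).ne'
    apply ContinuousOn.congr (f := fun x => (c d)⁻¹ * rho d x)
    · exact (continuousOn_const.mul (rho_contOn hd))
    · intro x hx; unfold rho; field_simp; rfl
  -- integrability of g on Icc 0 1
  have hgmeas : Measurable g := by
    apply Measurable.mul
    · measurability
    · exact (by measurability : Measurable fun y : ℝ => y ^ a).comp
        (measurable_const.sub measurable_id)
  have hmaj : IntegrableOn (fun x : ℝ => x ^ (-(1/2):ℝ)) (Icc (0:ℝ) 1) := by
    rw [integrableOn_Icc_iff_integrableOn_Ioc]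
    exact (intervalIntegrable_rpow' (by norm_num : (-1:ℝ) < -(1/2))).1
  have hg1 : IntegrableOn g (Icc (0:ℝ) 1) := by
    apply hmaj.mono' (hgmeas.aestronglyMeasurable.restrict)
    refine (MeasureTheory.ae_restrict_iff' measurableSet_Icc).2 (Filter.Eventually.of_forall ?_)
    intro x hx
    have h1 : 0 ≤ x ^ (-(1/2):ℝ) := Real.rpow_nonneg hx.1 _
    have h2 : 0 ≤ (1-x)^a := Real.rpow_nonneg (by linarith [hx.2]) _
    have h3 : (1-x)^a ≤ 1 := Real.rpow_le_one (by linarith [hx.2]) (by linarith [hx.1]) ha0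
    rw [Real.norm_of_nonneg (mul_nonneg h1 h2)]
    calc x ^ (-(1/2):ℝ) * (1-x)^a ≤ x ^ (-(1/2):ℝ) * 1 := by
          exact mul_le_mul_of_nonneg_left h3 h1
      _ = x ^ (-(1/2):ℝ) := mul_one _
  -- substitution t ↦ t²
  have himg1 : (fun t : ℝ => t^2) '' (Ioo (0 ⊓ 1 : ℝ) (0 ⊔ 1)) ⊆ Ioo (0:ℝ) 1 := by
    rintro y ⟨x, hx, rfl⟩
    simp only [inf_of_le_left zero_le_one, sup_of_le_right zero_le_one, mem_Ioo] at hx ⊢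
    obtain ⟨h1, h2⟩ := hx
    constructor <;> nlinarith
  have himg2 : (fun t : ℝ => t^2) '' (uIcc (0:ℝ) 1) ⊆ Icc (0:ℝ) 1 := by
    rintro y ⟨x, hx, rfl⟩
    rw [uIcc_of_le zero_le_one] at hx
    simp only [mem_Icc] at hx ⊢
    obtain ⟨h1, h2⟩ := hx
    constructor <;> nlinarith
  have hgcont : ContinuousOn g (Ioo (0:ℝ) 1) := by
    apply ContinuousOn.mul
    · intro x hx
      exact (Real.continuousAt_rpow_const x _ (Or.inl (ne_of_gt hx.1))).continuousWithinAt
    · intro x hx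
      have : ContinuousAt (fun x : ℝ => (1-x)^a) x := by
        have h1 : ContinuousAt (fun x : ℝ => (1:ℝ) - x) x := by fun_prop
        exact (Real.continuousAt_rpow_const _ _ (Or.inl (by linarith [hx.2]))).comp h1
      exact this.continuousWithinAt
  have hg2 : IntegrableOn (fun x : ℝ => (2*x) • g (x^2)) (uIcc (0:ℝ) 1) := by
    rw [uIcc_of_le zero_le_one]
    have hcont2 : ContinuousOn (fun x : ℝ => 2 * (1 - x^2)^a) (Icc (0:ℝ) 1) :=
      continuousOn_const.mul hbase
    have hint2 : IntegrableOn (fun x : ℝ => 2 * (1 - x^2)^a) (Icc (0:ℝ) 1) :=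
      hcont2.integrableOn_compact isCompact_Icc
    apply hint2.congr
    have h0 : ∀ᵐ x ∂(volume.restrict (Icc (0:ℝ) 1)), x ≠ 0 := by
      refine MeasureTheory.ae_restrict_of_ae ?_
      rw [MeasureTheory.ae_iff]
      simpa using measure_singleton (0:ℝ)
    filter_upwards [h0, MeasureTheory.ae_restrict_mem measurableSet_Icc] with x hx0 hx
    have hxpos : 0 < x := lt_of_le_of_ne hx.1 (Ne.symm hx0)
    show 2 * (1-x^2)^a = (2*x) • g (x^2)
    unfold g
    have hsq : (x^2 : ℝ) ^ (-(1/2):ℝ) = x⁻¹ := by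
      rw [← Real.rpow_natCast x 2, ← Real.rpow_mul hxpos.le]
      norm_num
      rw [show (-1 : ℝ) = ((-1 : ℤ) : ℝ) by norm_num, Real.rpow_intCast, zpow_neg_one]
    simp only [smul_eq_mul]
    rw [hsq]
    field_simp
  have hsub := integral_comp_smul_deriv''' (a := (0:ℝ)) (b := 1)
      (f := fun t => t^2) (f' := fun t => 2*t) (g := g)
      (by apply Continuous.continuousOn; fun_prop)
      (fun x _ => by
        simpa [mul_comm] using ((hasDerivAt_pow 2 x)).hasDerivWithinAt (s := Ioi x))
      (hgcont.mono himg1) (hg1.mono_set himg2) hg2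
  -- now hsub : ∫ x in 0..1, (2x) • g (x²) = ∫ u in 0²..1², g u
  have hpt : ∀ x ∈ Ioc (0:ℝ) 1, (fun t : ℝ => 2*t) x • (g ∘ fun t : ℝ => t^2) x
      = 2 * (1-x^2)^a := by
    intro x hx
    have hxpos : 0 < x := hx.1
    show (2*x) • g (x^2) = 2 * (1-x^2)^a
    unfold g
    have hsq : (x^2 : ℝ) ^ (-(1/2):ℝ) = x⁻¹ := by
      rw [← Real.rpow_natCast x 2, ← Real.rpow_mul hxpos.le]
      norm_num
      rw [show (-1 : ℝ) = ((-1 : ℤ) : ℝ) by norm_num, Real.rpow_intCast, zpow_neg_one]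
    simp only [smul_eq_mul, Function.comp]
    rw [hsq]
    field_simp
  have hLHS : ∫ x in (0:ℝ)..1, (fun t : ℝ => 2*t) x • (g ∘ fun t : ℝ => t^2) x
      = 2 * ∫ t in (0:ℝ)..1, (1 - t^2)^a := by
    rw [← intervalIntegral.integral_const_mul]
    apply intervalIntegral.integral_congr_ae
    apply MeasureTheory.ae_of_all
    intro x hx
    rw [uIoc_of_le zero_le_one] at hx
    exact hpt x hx
  have hgval : ∫ u in (0:ℝ)..1, g u
      = Real.Gamma (1/2) * Real.Gamma (a+1) / Real.Gamma (1/2 + (a+1)) := by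
    have : g = fun u => u ^ ((1:ℝ)/2 - 1) * (1-u) ^ ((a+1) - 1) := by
      funext u; unfold g; norm_num
    rw [this]
    exact real_beta (by norm_num) (by linarith)
  have hJ : ∫ t in (0:ℝ)..1, (1 - t^2)^a
      = Real.sqrt π * Real.Gamma (((d:ℝ)-1)/2) / (2 * Real.Gamma ((d:ℝ)/2)) := by
    have hG1 : 0 < Real.Gamma ((d:ℝ)/2) := Real.Gamma_pos_of_pos (by linarith)
    have h2 : (2:ℝ) * ∫ t in (0:ℝ)..1, (1 - t^2)^a
        = Real.sqrt π * Real.Gamma (((d:ℝ)-1)/2) / Real.Gamma ((d:ℝ)/2) := by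
      rw [← hLHS, hsub]
      have e0 : (fun t : ℝ => t^2) 0 = 0 := by norm_num
      have e1 : (fun t : ℝ => t^2) 1 = 1 := by norm_num
      rw [zero_pow two_ne_zero, one_pow, hgval, Real.Gamma_one_half_eq]
      have ea1 : a + 1 = ((d:ℝ)-1)/2 := by unfold a; ring
      rw [ea1, show (1:ℝ)/2 + ((d:ℝ)-1)/2 = (d:ℝ)/2 by ring]
    rw [eq_div_iff (mul_pos two_pos hG1).ne']
    calc (∫ t in (0:ℝ)..1, (1 - t^2)^a) * (2 * Real.Gamma ((d:ℝ)/2))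
        = (2 * ∫ t in (0:ℝ)..1, (1 - t^2)^a) * Real.Gamma ((d:ℝ)/2) := by ring
      _ = (Real.sqrt π * Real.Gamma (((d:ℝ)-1)/2) / Real.Gamma ((d:ℝ)/2))
            * Real.Gamma ((d:ℝ)/2) := by rw [h2]
      _ = Real.sqrt π * Real.Gamma (((d:ℝ)-1)/2) := by field_simp
  have hrho : ∫ t in (0:ℝ)..1, rho d t = c d * ∫ t in (0:ℝ)..1, (1 - t^2)^a := by
    rw [← intervalIntegral.integral_const_mul]
    rfl
  rw [hrho, hJ]
  unfold c
  have hG1 : 0 < Real.Gamma ((d:ℝ)/2) := Real.Gamma_pos_of_pos (by linarith)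
  have hG2 : 0 < Real.Gamma (((d:ℝ)-1)/2) := Real.Gamma_pos_of_pos (by linarith)
  have hpi : 0 < Real.sqrt π := Real.sqrt_pos.mpr Real.pi_pos
  field_simp
  try ring

lemma integral_rho_Ioc {d : ℕ} (hd : 3 ≤ d) : ∫ t in Ioc (0:ℝ) 1, rho d t = 1 := by
  rw [← intervalIntegral.integral_of_le zero_le_one]
  exact integral_rho hd

lemma t_rho_integrable {d : ℕ} (hd : 3 ≤ d) :
    IntegrableOn (fun t : ℝ => t * rho d t) (Ioc (0:ℝ) 1) := by
  have : ContinuousOn (fun t : ℝ => t * rho d t) (Icc (0:ℝ) 1) :=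
    continuousOn_id.mul (rho_contOn hd)
  exact (this.integrableOn_compact isCompact_Icc).mono_set Ioc_subset_Icc_self

lemma integral_t_rho_le {d : ℕ} (hd : 3 ≤ d) :
    ∫ t in Ioc (0:ℝ) 1, t * rho d t ≤ c d / 2 := by
  have h1 : ∫ t in Ioc (0:ℝ) 1, t * rho d t ≤ ∫ t in Ioc (0:ℝ) 1, c d * t := by
    apply MeasureTheory.setIntegral_mono_on (t_rho_integrable hd)
    · exact (continuousOn_const.mul continuousOn_id).integrableOn_compact isCompact_Icc
        |>.mono_set Ioc_subset_Icc_self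
    · exact measurableSet_Ioc
    · intro t ht
      have ht' : t ∈ Icc (0:ℝ) 1 := ⟨ht.1.le, ht.2⟩
      calc t * rho d t ≤ t * c d := mul_le_mul_of_nonneg_left (rho_le hd ht') ht.1.le
        _ = c d * t := mul_comm _ _
  have h2 : ∫ t in Ioc (0:ℝ) 1, c d * t = c d / 2 := by
    rw [← intervalIntegral.integral_of_le zero_le_one,
        intervalIntegral.integral_const_mul, integral_id]
    norm_num
    ring
  linarith

lemma rho_integrableOn {d : ℕ} (hd : 3 ≤ d) : IntegrableOn (rho d) (Ioc (0:ℝ) 1) :=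
  ((rho_contOn hd).integrableOn_compact isCompact_Icc).mono_set Ioc_subset_Icc_self

end RhoFacts

set_option maxHeartbeats 2000000 in
theorem S_bounded_H1 (d : ℕ) (hd : 3 ≤ d) (f : ℝ → ℝ)
    (hf : ContDiffOn ℝ 1 f (Set.Icc (0:ℝ) 1)) :
    (∫ s in Set.Ioc (0:ℝ) 1, (S d f s) ^ 2) +
        (∫ s in Set.Ioc (0:ℝ) 1, (deriv (S d f) s) ^ 2) ≤
      (2 + c d / 2) *
        ((∫ t in Set.Ioc (0:ℝ) 1, (f t) ^ 2) +
          (∫ t in Set.Ioc (0:ℝ) 1, (deriv f t) ^ 2)) := by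
  have hd3 : (3:ℝ) ≤ (d:ℝ) := by exact_mod_cast hd
  have hc := c_pos hd
  haveI hfin : IsFiniteMeasure (volume.restrict (Ioo (0:ℝ) 1)) := by
    constructor; rw [Measure.restrict_apply_univ]; simp [Real.volume_Ioo]
  haveI hfin2 : IsFiniteMeasure (volume.restrict (Ioc (0:ℝ) 1)) := by
    constructor; rw [Measure.restrict_apply_univ]; simp [Real.volume_Ioc]
  set g : ℝ → ℝ := deriv f with hgdef
  obtain ⟨Mf, hMf⟩ : ∃ C, ∀ x ∈ Icc (0:ℝ) 1, ‖f x‖ ≤ C :=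
    isCompact_Icc.exists_bound_of_continuousOn hf.continuousOn
  have hMf0 : 0 ≤ Mf := le_trans (norm_nonneg _) (hMf 0 ⟨le_refl _, zero_le_one⟩)
  have hudiff : UniqueDiffOn ℝ (Icc (0:ℝ) 1) := uniqueDiffOn_Icc one_pos
  have hdW : ContinuousOn (derivWithin f (Icc 0 1)) (Icc (0:ℝ) 1) :=
    hf.continuousOn_derivWithin hudiff le_rfl
  obtain ⟨M, hM⟩ : ∃ C, ∀ x ∈ Icc (0:ℝ) 1, ‖derivWithin f (Icc 0 1) x‖ ≤ C :=
    isCompact_Icc.exists_bound_of_continuousOn hdW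
  have hM0 : 0 ≤ M := le_trans (norm_nonneg _) (hM 0 ⟨le_refl _, zero_le_one⟩)
  have hgbound : ∀ x ∈ Ioo (0:ℝ) 1, |g x| ≤ M := by
    intro x hx
    have h1 : derivWithin f (Icc 0 1) x = g x :=
      derivWithin_of_mem_nhds (Icc_mem_nhds hx.1 hx.2)
    rw [← h1]
    exact hM x (Ioo_subset_Icc_self hx)
  have hfderiv : ∀ x ∈ Ioo (0:ℝ) 1, HasDerivAt f (g x) x := by
    intro x hx
    have h1 : ContDiffAt ℝ 1 f x :=
      (hf x (Ioo_subset_Icc_self hx)).contDiffAt (Icc_mem_nhds hx.1 hx.2)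
    exact (h1.differentiableAt one_ne_zero).hasDerivAt
  have hgmeas : Measurable g := measurable_deriv f
  have hae1 : ∀ᵐ x ∂(volume.restrict (Ioc (0:ℝ) 1)), x ∈ Ioo (0:ℝ) 1 := by
    have h0 : ∀ᵐ x ∂(volume.restrict (Ioc (0:ℝ) 1)), x ≠ 1 := by
      refine MeasureTheory.ae_restrict_of_ae ?_
      rw [MeasureTheory.ae_iff]; simpa using measure_singleton (1:ℝ)
    filter_upwards [h0, MeasureTheory.ae_restrict_mem measurableSet_Ioc] with x hx1 hx
    exact ⟨hx.1, lt_of_le_of_ne hx.2 hx1⟩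
  have hgsq_int : IntegrableOn (fun x => g x ^ 2) (Ioc (0:ℝ) 1) := by
    apply (integrable_const (M^2)).mono'
      ((hgmeas.pow_const 2).aestronglyMeasurable.restrict)
    filter_upwards [hae1] with x hx
    rw [Real.norm_of_nonneg (sq_nonneg _)]
    have := hgbound x hx
    nlinarith [this, abs_nonneg (g x), sq_abs (g x)]
  set B := ∫ t in Ioc (0:ℝ) 1, g t ^ 2 with hB
  have hB0 : 0 ≤ B :=
    MeasureTheory.setIntegral_nonneg measurableSet_Ioc fun x _ => sq_nonneg _
  have hfsq_int : IntegrableOn (fun x => f x ^ 2) (Ioc (0:ℝ) 1) :=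
    (((hf.continuousOn.mul hf.continuousOn).congr (fun x _ => sq (f x) ▸ rfl)).integrableOn_compact
        isCompact_Icc).mono_set Ioc_subset_Icc_self
  have hA0 : 0 ≤ ∫ t in Ioc (0:ℝ) 1, f t ^ 2 :=
    MeasureTheory.setIntegral_nonneg measurableSet_Ioc fun x _ => sq_nonneg _
  -- continuity of t ↦ f (t*x) * rho t for x ∈ Ioo 0 1
  have hmapIcc : ∀ x ∈ Ioo (0:ℝ) 1, ∀ t ∈ Icc (0:ℝ) 1, t * x ∈ Icc (0:ℝ) 1 := by
    intro x hx t ht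
    constructor
    · exact mul_nonneg ht.1 hx.1.le
    · calc t*x ≤ 1*x := mul_le_mul_of_nonneg_right ht.2 hx.1.le
        _ ≤ 1 := by linarith [hx.2]
  have hcontS : ∀ x ∈ Ioo (0:ℝ) 1, ContinuousOn (fun t : ℝ => f (t*x) * rho d t) (Icc (0:ℝ) 1) := by
    intro x hx
    refine ContinuousOn.mul ?_ (rho_contOn hd)
    exact hf.continuousOn.comp ((continuous_id.mul continuous_const).continuousOn)
      (fun t ht => hmapIcc x hx t ht)
  have hintS : ∀ x ∈ Ioo (0:ℝ) 1, IntervalIntegrable (fun t => f (t*x) * rho d t) volume 0 1 := by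
    intro x hx
    apply ContinuousOn.intervalIntegrable
    rw [uIcc_of_le zero_le_one]
    exact hcontS x hx
  have hmem : ∀ x ∈ Ioo (0:ℝ) 1, ∀ t ∈ Ioc (0:ℝ) 1, t * x ∈ Ioo (0:ℝ) 1 := by
    intro x hx t ht
    refine ⟨mul_pos ht.1 hx.1, ?_⟩
    calc t*x ≤ x := mul_le_of_le_one_left hx.1.le ht.2
      _ < 1 := hx.2
  have hbnd : ∀ x ∈ Ioo (0:ℝ) 1, ∀ t ∈ Ioc (0:ℝ) 1, ‖t * g (t*x) * rho d t‖ ≤ M * c d := by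
    intro x hx t ht
    have htx := hmem x hx t ht
    have h1 := hgbound (t*x) htx
    have h2 := rho_le hd ⟨ht.1.le, ht.2⟩
    have h3 := rho_nonneg hd ⟨ht.1.le, ht.2⟩
    rw [Real.norm_eq_abs, abs_mul, abs_mul]
    have h4 : |t| ≤ 1 := by rw [abs_of_pos ht.1]; exact ht.2
    have h5 : |rho d t| = rho d t := abs_of_nonneg h3
    have h6 : |t| * |g (t*x)| ≤ M := by nlinarith [abs_nonneg (g (t*x)), abs_nonneg t]
    have h7 : |rho d t| ≤ c d := by rw [h5]; exact h2
    exact mul_le_mul h6 h7 (abs_nonneg _) hM0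
  -- FTC and difference estimate
  have hgII : ∀ u v : ℝ, 0 ≤ u → v ≤ 1 → IntegrableOn g (Ioc u v) := by
    intro u v hu hv
    apply (integrable_const M).mono' (hgmeas.aestronglyMeasurable.restrict)
    have h0 : ∀ᵐ x ∂(volume.restrict (Ioc u v)), x ≠ 1 := by
      refine MeasureTheory.ae_restrict_of_ae ?_
      rw [MeasureTheory.ae_iff]; simpa using measure_singleton (1:ℝ)
    filter_upwards [h0, MeasureTheory.ae_restrict_mem measurableSet_Ioc] with x hx1 hx
    exact hgbound x ⟨lt_of_le_of_lt hu hx.1, lt_of_le_of_ne (hx.2.trans hv) hx1⟩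
  have hFTC : ∀ u v : ℝ, 0 ≤ u → u ≤ v → v ≤ 1 → f v - f u = ∫ x in u..v, g x := by
    intro u v hu huv hv
    rw [intervalIntegral.integral_eq_sub_of_hasDeriv_right_of_le huv
      (hf.continuousOn.mono (Icc_subset_Icc hu hv))
      (fun x hx => (hfderiv x ⟨lt_of_le_of_lt hu hx.1, lt_of_lt_of_le hx.2 hv⟩).hasDerivWithinAt)
      ((intervalIntegrable_iff_integrableOn_Ioc_of_le huv).mpr (hgII u v hu hv))]
  have hdiff_sq : ∀ u v : ℝ, 0 ≤ u → u ≤ v → v ≤ 1 → (f v - f u)^2 ≤ B := by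
    intro u v hu huv hv
    haveI : IsFiniteMeasure (volume.restrict (Ioc u v)) := by
      constructor; rw [Measure.restrict_apply_univ]; simp [Real.volume_Ioc]
    have haeuv : ∀ᵐ x ∂(volume.restrict (Ioc u v)), x ∈ Ioo (0:ℝ) 1 := by
      have h0 : ∀ᵐ x ∂(volume.restrict (Ioc u v)), x ≠ 1 := by
        refine MeasureTheory.ae_restrict_of_ae ?_
        rw [MeasureTheory.ae_iff]; simpa using measure_singleton (1:ℝ)
      filter_upwards [h0, MeasureTheory.ae_restrict_mem measurableSet_Ioc] with x hx1 hx
      exact ⟨lt_of_le_of_lt hu hx.1, lt_of_le_of_ne (hx.2.trans hv) hx1⟩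
    have hML2 : MemLp g 2 (volume.restrict (Ioc u v)) := by
      apply MemLp.of_bound (hgmeas.aestronglyMeasurable.restrict) M
      filter_upwards [haeuv] with x hx
      exact hgbound x hx
    have hcs := my_cs (φ := g) (ψ := fun _ => (1:ℝ)) hML2 (memLp_const 1)
    have h1 : ∫ x, g x * 1 ∂(volume.restrict (Ioc u v)) = ∫ x in Ioc u v, g x := by simp
    have h2 : ∫ x, (fun _ => (1:ℝ)) x ^2 ∂(volume.restrict (Ioc u v)) = v - u := by
      simp [Real.volume_Ioc, huv, ENNReal.toReal_ofReal (by linarith : (0:ℝ) ≤ v - u)]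
    have h3 : ∫ x in Ioc u v, g x ^2 ≤ B := by
      apply MeasureTheory.setIntegral_mono_set hgsq_int
      · exact Filter.Eventually.of_forall fun x => sq_nonneg _
      · exact (Ioc_subset_Ioc hu hv).eventuallyLE
    have h3' : 0 ≤ ∫ x in Ioc u v, g x ^2 :=
      MeasureTheory.setIntegral_nonneg measurableSet_Ioc fun x _ => sq_nonneg _
    have hfv : f v - f u = ∫ x in Ioc u v, g x := by
      rw [hFTC u v hu huv hv, intervalIntegral.integral_of_le huv]
    rw [h1, h2] at hcs
    calc (f v - f u)^2 = (∫ x in Ioc u v, g x)^2 := by rw [hfv]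
      _ ≤ (∫ x in Ioc u v, g x ^2) * (v - u) := hcs
      _ ≤ B * 1 := mul_le_mul h3 (by linarith) (by linarith) hB0
      _ = B := mul_one _
  have hSbound : ∀ s ∈ Ioo (0:ℝ) 1, (S d f s)^2 ≤ 2*(f s)^2 + 2*B := by
    intro s hs
    have hint1 := hintS s hs
    have hint2 : IntervalIntegrable (fun t => (f s - f (t*s)) * rho d t) volume 0 1 := by
      apply ContinuousOn.intervalIntegrable
      rw [uIcc_of_le zero_le_one]
      refine ContinuousOn.mul ?_ (rho_contOn hd)
      exact continuousOn_const.sub (hf.continuousOn.comp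
        ((continuous_id.mul continuous_const).continuousOn) (fun t ht => hmapIcc s hs t ht))
    have hint3 : IntervalIntegrable (fun t => f s * rho d t) volume 0 1 :=
      (rho_intervalIntegrable hd).const_mul _
    have hsplit : S d f s = f s - ∫ t in (0:ℝ)..1, (f s - f (t*s)) * rho d t := by
      have e : S d f s = ∫ t in (0:ℝ)..1, (f s * rho d t - (f s - f (t*s)) * rho d t) := by
        show (∫ t in (0:ℝ)..1, f (t*s) * rho d t) = _
        apply intervalIntegral.integral_congr
        intro t _; ring
      rw [e, intervalIntegral.integral_sub hint3 hint2, intervalIntegral.integral_const_mul,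
          integral_rho hd, mul_one]
    have habs : ∀ t ∈ Icc (0:ℝ) 1, |f s - f (t*s)| ≤ Real.sqrt B := by
      intro t ht
      have hts : t*s ≤ s := by nlinarith [ht.1, ht.2, hs.1.le]
      have h1 := hdiff_sq (t*s) s (mul_nonneg ht.1 hs.1.le) hts hs.2.le
      exact Real.abs_le_sqrt h1
    have hR : |∫ t in (0:ℝ)..1, (f s - f (t*s)) * rho d t| ≤ Real.sqrt B := by
      have h1 : |∫ t in (0:ℝ)..1, (f s - f (t*s)) * rho d t|
          ≤ ∫ t in (0:ℝ)..1, |(f s - f (t*s)) * rho d t| :=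
        intervalIntegral.abs_integral_le_integral_abs zero_le_one
      have h2 : ∫ t in (0:ℝ)..1, |(f s - f (t*s)) * rho d t|
          ≤ ∫ t in (0:ℝ)..1, Real.sqrt B * rho d t := by
        apply intervalIntegral.integral_mono_on zero_le_one hint2.abs
          ((rho_intervalIntegrable hd).const_mul _)
        intro t ht
        rw [abs_mul, abs_of_nonneg (rho_nonneg hd ht)]
        exact mul_le_mul_of_nonneg_right (habs t ht) (rho_nonneg hd ht)
      have h3 : ∫ t in (0:ℝ)..1, Real.sqrt B * rho d t = Real.sqrt B := by
        rw [intervalIntegral.integral_const_mul, integral_rho hd, mul_one]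
      linarith
    have hSabs : |S d f s| ≤ |f s| + Real.sqrt B := by
      rw [hsplit]
      calc |f s - ∫ t in (0:ℝ)..1, (f s - f (t*s)) * rho d t|
          ≤ |f s| + |∫ t in (0:ℝ)..1, (f s - f (t*s)) * rho d t| := by
            have := abs_add_le (f s) (-(∫ t in (0:ℝ)..1, (f s - f (t*s)) * rho d t))
            simpa [sub_eq_add_neg] using this
        _ ≤ |f s| + Real.sqrt B := by linarith
    nlinarith [sq_abs (S d f s), sq_abs (f s), Real.sq_sqrt hB0,
      sq_nonneg (|f s| - Real.sqrt B), hSabs, abs_nonneg (S d f s), abs_nonneg (f s),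
      Real.sqrt_nonneg B]
  set D := fun s : ℝ => ∫ t in (0:ℝ)..1, t * g (t*s) * rho d t with hDdef
  have hSderiv : ∀ s ∈ Ioo (0:ℝ) 1, HasDerivAt (S d f) (D s) s := by
    intro s hs
    have hε : 0 < min s (1-s) := lt_min hs.1 (by linarith [hs.2])
    have hball : Metric.ball s (min s (1-s)) ⊆ Ioo (0:ℝ) 1 := by
      intro x hx
      rw [Metric.mem_ball, Real.dist_eq] at hx
      have h1 := abs_lt.mp hx
      have h2 := min_le_left s (1-s)
      have h3 := min_le_right s (1-s)
      constructor <;> [linarith [h1.1]; linarith [h1.2]]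
    have key := (intervalIntegral.hasDerivAt_integral_of_dominated_loc_of_deriv_le
      (F := fun x t => f (t*x) * rho d t) (F' := fun x t => t * g (t*x) * rho d t)
      (x₀ := s) (a := 0) (b := 1) (bound := fun _ => M * c d) (μ := volume) (Metric.ball_mem_nhds s hε)
      ?_ (hintS s hs) ?_ ?_ ?_ ?_).2
    · exact key
    · apply Filter.eventually_of_mem (Metric.ball_mem_nhds s hε)
      intro x hx
      have hx' := hball hx
      rw [uIoc_of_le zero_le_one]
      exact ((hcontS x hx').mono Ioc_subset_Icc_self).aestronglyMeasurable measurableSet_Ioc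
    · exact ((measurable_id.mul (hgmeas.comp (measurable_id.mul_const s))).mul
        rho_measurable).aestronglyMeasurable.restrict
    · apply MeasureTheory.ae_of_all
      intro t ht x hx
      rw [uIoc_of_le zero_le_one] at ht
      exact hbnd x (hball hx) t ht
    · exact intervalIntegrable_const
    · apply MeasureTheory.ae_of_all
      intro t ht x hx
      rw [uIoc_of_le zero_le_one] at ht
      have hx' := hball hx
      have htx := hmem x hx' t ht
      have h1 := hfderiv (t*x) htx
      have h2 : HasDerivAt (fun y : ℝ => t*y) t x := by
        simpa using (hasDerivAt_id x).const_mul t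
      have h3 := (h1.comp x h2).mul_const (rho d t)
      exact h3.congr_deriv (by ring)
  set K := fun s : ℝ => ∫ t in Ioc (0:ℝ) 1, t * g (t*s)^2 * rho d t with hKdef
  have hDbound : ∀ s ∈ Ioo (0:ℝ) 1, (D s)^2 ≤ (c d/2) * K s := by
    intro s hs
    set φ := fun t : ℝ => Real.sqrt (t * rho d t) with hφdef
    set ψ := fun t : ℝ => Real.sqrt (t * rho d t) * g (t*s) with hψdef
    have hφmeas : Measurable φ :=
      Real.continuous_sqrt.measurable.comp (measurable_id.mul rho_measurable)
    have hψmeas : Measurable ψ := hφmeas.mul (hgmeas.comp (measurable_id.mul_const s))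
    have htρ : ∀ t ∈ Ioc (0:ℝ) 1, 0 ≤ t * rho d t ∧ t * rho d t ≤ c d := by
      intro t ht
      have h0 := rho_nonneg hd ⟨ht.1.le, ht.2⟩
      have h2 := rho_le hd ⟨ht.1.le, ht.2⟩
      exact ⟨mul_nonneg ht.1.le h0, by nlinarith [ht.1.le, ht.2]⟩
    have hφL : MemLp φ 2 (volume.restrict (Ioc (0:ℝ) 1)) := by
      apply MemLp.of_bound (hφmeas.aestronglyMeasurable.restrict) (Real.sqrt (c d))
      filter_upwards [MeasureTheory.ae_restrict_mem measurableSet_Ioc] with t ht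
      rw [Real.norm_eq_abs, abs_of_nonneg (Real.sqrt_nonneg _)]
      exact Real.sqrt_le_sqrt (htρ t ht).2
    have hψL : MemLp ψ 2 (volume.restrict (Ioc (0:ℝ) 1)) := by
      apply MemLp.of_bound (hψmeas.aestronglyMeasurable.restrict) (Real.sqrt (c d) * M)
      filter_upwards [MeasureTheory.ae_restrict_mem measurableSet_Ioc] with t ht
      have htx := hmem s hs t ht
      have h1 := hgbound (t*s) htx
      have h2 : Real.sqrt (t * rho d t) ≤ Real.sqrt (c d) := Real.sqrt_le_sqrt (htρ t ht).2
      rw [Real.norm_eq_abs, abs_mul, abs_of_nonneg (Real.sqrt_nonneg _)]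
      exact mul_le_mul h2 h1 (abs_nonneg _) (Real.sqrt_nonneg _)
    have hcs := my_cs hφL hψL
    have hφψ : ∫ t, φ t * ψ t ∂(volume.restrict (Ioc (0:ℝ) 1)) = D s := by
      show (∫ t in Ioc (0:ℝ) 1, φ t * ψ t) = ∫ t in (0:ℝ)..1, t * g (t*s) * rho d t
      rw [intervalIntegral.integral_of_le zero_le_one]
      apply MeasureTheory.setIntegral_congr_fun measurableSet_Ioc
      intro t ht
      show φ t * ψ t = t * g (t*s) * rho d t
      have h1 : Real.sqrt (t * rho d t) * Real.sqrt (t * rho d t) = t * rho d t :=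
        Real.mul_self_sqrt (htρ t ht).1
      calc φ t * ψ t
          = (Real.sqrt (t * rho d t) * Real.sqrt (t * rho d t)) * g (t*s) := by
            rw [hφdef, hψdef]; ring
        _ = (t * rho d t) * g (t*s) := by rw [h1]
        _ = t * g (t*s) * rho d t := by ring
    have hφ2 : ∫ t, φ t ^2 ∂(volume.restrict (Ioc (0:ℝ) 1)) = ∫ t in Ioc (0:ℝ) 1, t * rho d t := by
      apply MeasureTheory.setIntegral_congr_fun measurableSet_Ioc
      intro t ht
      show φ t ^2 = t * rho d t
      rw [sq]; exact Real.mul_self_sqrt (htρ t ht).1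
    have hψ2 : ∫ t, ψ t ^2 ∂(volume.restrict (Ioc (0:ℝ) 1)) = K s := by
      apply MeasureTheory.setIntegral_congr_fun measurableSet_Ioc
      intro t ht
      show ψ t ^2 = t * g (t*s)^2 * rho d t
      have h1 : Real.sqrt (t * rho d t) ^2 = t * rho d t := by
        rw [sq]; exact Real.mul_self_sqrt (htρ t ht).1
      calc ψ t ^2 = Real.sqrt (t * rho d t) ^2 * g (t*s)^2 := by rw [hψdef]; ring
        _ = (t * rho d t) * g (t*s)^2 := by rw [h1]
        _ = t * g (t*s)^2 * rho d t := by ring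
    rw [hφψ, hφ2, hψ2] at hcs
    have hK0 : 0 ≤ K s := by
      apply MeasureTheory.setIntegral_nonneg measurableSet_Ioc
      intro t ht
      exact mul_nonneg (mul_nonneg ht.1.le (sq_nonneg _)) (rho_nonneg hd ⟨ht.1.le, ht.2⟩)
    calc (D s)^2 ≤ (∫ t in Ioc (0:ℝ) 1, t * rho d t) * K s := hcs
      _ ≤ (c d/2) * K s := mul_le_mul_of_nonneg_right (integral_t_rho_le hd) hK0
  have hDabs : ∀ s ∈ Ioo (0:ℝ) 1, |D s| ≤ M * c d := by
    intro s hs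
    have h1 := intervalIntegral.norm_integral_le_of_norm_le_const
      (C := M * c d) (f := fun t => t * g (t*s) * rho d t) (a := 0) (b := 1) ?_
    · simpa using h1
    · intro t ht
      rw [uIoc_of_le zero_le_one] at ht
      exact hbnd s hs t ht
  -- Fubini
  have hWmeas : Measurable (Function.uncurry fun (s t : ℝ) => t * g (t*s)^2 * rho d t) := by
    show Measurable fun p : ℝ × ℝ => p.2 * g (p.2 * p.1)^2 * rho d p.2
    exact (measurable_snd.mul
      ((hgmeas.comp (measurable_snd.mul measurable_fst)).pow_const 2)).mul
      (rho_measurable.comp measurable_snd)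
  have hWint : Integrable (Function.uncurry fun (s t : ℝ) => t * g (t*s)^2 * rho d t)
      ((volume.restrict (Ioo (0:ℝ) 1)).prod (volume.restrict (Ioc (0:ℝ) 1))) := by
    apply (integrable_const (M^2 * c d)).mono' hWmeas.aestronglyMeasurable
    rw [MeasureTheory.Measure.prod_restrict]
    filter_upwards [MeasureTheory.ae_restrict_mem (measurableSet_Ioo.prod measurableSet_Ioc)]
      with p hp
    obtain ⟨hp1, hp2⟩ := hp
    show ‖p.2 * g (p.2 * p.1)^2 * rho d p.2‖ ≤ M^2 * c d
    have htx := hmem p.1 hp1 p.2 hp2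
    have h1 := hgbound (p.2 * p.1) htx
    have h2 := rho_le hd ⟨hp2.1.le, hp2.2⟩
    have h3 := rho_nonneg hd ⟨hp2.1.le, hp2.2⟩
    have h4 : 0 ≤ p.2 * g (p.2 * p.1)^2 := mul_nonneg hp2.1.le (sq_nonneg _)
    rw [Real.norm_eq_abs, abs_of_nonneg (mul_nonneg h4 h3)]
    have h5 : p.2 * g (p.2 * p.1)^2 ≤ M^2 := by
      nlinarith [sq_abs (g (p.2 * p.1)), abs_nonneg (g (p.2 * p.1)), hp2.1.le, hp2.2,
        sq_nonneg (g (p.2 * p.1))]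
    exact mul_le_mul h5 h2 h3 (by positivity)
  have hKint : Integrable K (volume.restrict (Ioo (0:ℝ) 1)) := hWint.integral_prod_left
  have hKle : ∫ s in Ioo (0:ℝ) 1, K s ≤ B := by
    have hswap := MeasureTheory.integral_integral_swap
      (μ := volume.restrict (Ioo (0:ℝ) 1)) (ν := volume.restrict (Ioc (0:ℝ) 1))
      (f := fun s t => t * g (t*s)^2 * rho d t) hWint
    have inner_le : ∀ t ∈ Ioc (0:ℝ) 1,
        (∫ s in Ioo (0:ℝ) 1, t * g (t*s)^2 * rho d t) ≤ rho d t * B := by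
      intro t ht
      have ht0 : (0:ℝ) < t := ht.1
      have e1 : ∫ s in Ioo (0:ℝ) 1, t * g (t*s)^2 * rho d t
          = (t * rho d t) * ∫ s in Ioo (0:ℝ) 1, g (t*s)^2 := by
        rw [← MeasureTheory.integral_const_mul]
        apply MeasureTheory.setIntegral_congr_fun measurableSet_Ioo
        intro s _
        ring
      have e2 : ∫ s in Ioo (0:ℝ) 1, g (t*s)^2 = t⁻¹ * ∫ x in (0:ℝ)..t, g x ^2 := by
        rw [← MeasureTheory.integral_Ioc_eq_integral_Ioo,
          ← intervalIntegral.integral_of_le zero_le_one,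
          intervalIntegral.integral_comp_mul_left (fun u => g u ^2) ht0.ne']
        norm_num
      have e3 : ∫ x in (0:ℝ)..t, g x ^2 ≤ B := by
        rw [intervalIntegral.integral_of_le ht0.le]
        apply MeasureTheory.setIntegral_mono_set hgsq_int
        · exact Filter.Eventually.of_forall fun x => sq_nonneg _
        · exact (Ioc_subset_Ioc_right ht.2).eventuallyLE
      have h0 := rho_nonneg hd ⟨ht.1.le, ht.2⟩
      rw [e1, e2, show (t * rho d t) * (t⁻¹ * ∫ x in (0:ℝ)..t, g x ^2)
          = rho d t * ∫ x in (0:ℝ)..t, g x ^2 from by field_simp]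
      exact mul_le_mul_of_nonneg_left e3 h0
    have hint1 : Integrable (fun t => ∫ s in Ioo (0:ℝ) 1, t * g (t*s)^2 * rho d t)
        (volume.restrict (Ioc (0:ℝ) 1)) := hWint.integral_prod_right
    have hint2 : Integrable (fun t => rho d t * B) (volume.restrict (Ioc (0:ℝ) 1)) :=
      (rho_integrableOn hd).mul_const _
    calc ∫ s in Ioo (0:ℝ) 1, K s
        = ∫ t in Ioc (0:ℝ) 1, ∫ s in Ioo (0:ℝ) 1, t * g (t*s)^2 * rho d t := hswap
      _ ≤ ∫ t in Ioc (0:ℝ) 1, rho d t * B := by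
          apply MeasureTheory.integral_mono_ae hint1 hint2
          filter_upwards [MeasureTheory.ae_restrict_mem measurableSet_Ioc] with t ht
          exact inner_le t ht
      _ = B := by rw [MeasureTheory.integral_mul_const, integral_rho_Ioc hd, one_mul]
  -- putting the two integral bounds together
  have main1 : ∫ s in Ioo (0:ℝ) 1, (S d f s)^2 ≤ 2 * (∫ t in Ioc (0:ℝ) 1, f t ^ 2) + 2*B := by
    have hScont : ContinuousOn (S d f) (Ioo (0:ℝ) 1) := fun s hs =>
      (hSderiv s hs).continuousAt.continuousWithinAt
    have hSint : IntegrableOn (fun s => (S d f s)^2) (Ioo (0:ℝ) 1) := by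
      apply (integrable_const ((Mf * c d)^2)).mono'
        (((hScont.pow 2).aestronglyMeasurable measurableSet_Ioo))
      filter_upwards [MeasureTheory.ae_restrict_mem measurableSet_Ioo] with s hs
      have hb : |S d f s| ≤ Mf * c d := by
        have h1 := intervalIntegral.norm_integral_le_of_norm_le_const
          (C := Mf * c d) (f := fun t => f (t*s) * rho d t) (a := 0) (b := 1) ?_
        · simpa [S] using h1
        · intro t ht
          rw [uIoc_of_le zero_le_one] at ht
          have h2 := hMf (t*s) (hmapIcc s hs t ⟨ht.1.le, ht.2⟩)
          have h3 := rho_le hd ⟨ht.1.le, ht.2⟩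
          have h4 := rho_nonneg hd ⟨ht.1.le, ht.2⟩
          rw [Real.norm_eq_abs, abs_mul, abs_of_nonneg h4]
          exact mul_le_mul (by simpa using h2) h3 h4 hMf0
      rw [Real.norm_eq_abs, abs_of_nonneg (sq_nonneg _)]
      simp only [Pi.pow_apply]
      nlinarith [hb, abs_nonneg (S d f s), sq_abs (S d f s)]
    have hfsq_int' : IntegrableOn (fun x => 2 * f x ^ 2) (Ioo (0:ℝ) 1) :=
      (hfsq_int.mono_set Ioo_subset_Ioc_self).const_mul 2
    have hRHSint : Integrable (fun s => 2*(f s)^2 + 2*B) (volume.restrict (Ioo (0:ℝ) 1)) :=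
      hfsq_int'.add (integrable_const _)
    have hmono := MeasureTheory.integral_mono_ae hSint hRHSint ?_
    · calc ∫ s in Ioo (0:ℝ) 1, (S d f s)^2
          ≤ ∫ s in Ioo (0:ℝ) 1, (2*(f s)^2 + 2*B) := hmono
        _ = 2 * (∫ s in Ioo (0:ℝ) 1, f s ^2) + 2*B := by
            rw [MeasureTheory.integral_add hfsq_int' (integrable_const _),
              MeasureTheory.integral_const_mul, MeasureTheory.setIntegral_const]
            simp [Real.volume_Ioo]
        _ = 2 * (∫ t in Ioc (0:ℝ) 1, f t ^2) + 2*B := by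
            rw [MeasureTheory.integral_Ioc_eq_integral_Ioo]
    · filter_upwards [MeasureTheory.ae_restrict_mem measurableSet_Ioo] with s hs
      exact hSbound s hs
  have main2 : ∫ s in Ioo (0:ℝ) 1, (deriv (S d f) s)^2 ≤ (c d / 2) * B := by
    have hder_int : IntegrableOn (fun s => (deriv (S d f) s)^2) (Ioo (0:ℝ) 1) := by
      apply (integrable_const ((M * c d)^2)).mono'
        (((measurable_deriv (S d f)).pow_const 2).aestronglyMeasurable.restrict)
      filter_upwards [MeasureTheory.ae_restrict_mem measurableSet_Ioo] with s hs
      have h1 : deriv (S d f) s = D s := (hSderiv s hs).deriv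
      rw [Real.norm_eq_abs, abs_of_nonneg (sq_nonneg _), h1]
      nlinarith [hDabs s hs, abs_nonneg (D s), sq_abs (D s)]
    have step1 : ∫ s in Ioo (0:ℝ) 1, (deriv (S d f) s)^2
        ≤ ∫ s in Ioo (0:ℝ) 1, (c d/2) * K s := by
      apply MeasureTheory.integral_mono_ae hder_int (hKint.const_mul _)
      filter_upwards [MeasureTheory.ae_restrict_mem measurableSet_Ioo] with s hs
      rw [(hSderiv s hs).deriv]
      exact hDbound s hs
    calc ∫ s in Ioo (0:ℝ) 1, (deriv (S d f) s)^2
        ≤ ∫ s in Ioo (0:ℝ) 1, (c d/2) * K s := step1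
      _ = (c d/2) * ∫ s in Ioo (0:ℝ) 1, K s := MeasureTheory.integral_const_mul _ _
      _ ≤ (c d/2) * B := mul_le_mul_of_nonneg_left hKle (by linarith)
  rw [MeasureTheory.integral_Ioc_eq_integral_Ioo (f := fun s => (S d f s)^2),
      MeasureTheory.integral_Ioc_eq_integral_Ioo (f := fun s => (deriv (S d f) s)^2)]
  have hcB : 0 ≤ c d / 2 * (∫ t in Ioc (0:ℝ) 1, f t ^ 2) :=
    mul_nonneg (by linarith) hA0
  nlinarith [main1, main2, hA0, hB0, hc]
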